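/- Let (A, B, C) be a recollement of abelian categories with functors i^*, i_*, i^!, j_!, j^*, j_*, and assume that i^* and i^! are exact. Let (T1, F1) and (T2, F2) be torsion pairs in A and C, respectively. Set T = {B ∈ B | i^*(B) ∈ T1 and j^*(B) ∈ T2} and F = {B ∈ B | i^!(B) ∈ F1 and j^*(B) ∈ F2}. Then (T, F) is a torsion pair in B. -/

import Mathlib

set_option maxHeartbeats 1600000


open CategoryTheory CategoryTheory.Limits

namespace RecollementFS

/-- A recollement of abelian categories `(A, B, C)`. -/
structure AbelianRecollement (A B C : Type*) [Category A] [Category B] [Category C]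
    [Abelian A] [Abelian B] [Abelian C] where
  /-- `i_* : A ⥤ B` -/
  iStar : A ⥤ B
  /-- `i^* : B ⥤ A` -/
  iUpperStar : B ⥤ A
  /-- `i^! : B ⥤ A` -/
  iShriek : B ⥤ A
  /-- `j^* : B ⥤ C` -/
  jUpperStar : B ⥤ C
  /-- `j_! : C ⥤ B` -/
  jShriek : C ⥤ B
  /-- `j_* : C ⥤ B` -/
  jStar : C ⥤ B
  /-- `i^* ⊣ i_*` -/
  adj₁ : iUpperStar ⊣ iStar
  /-- `i_* ⊣ i^!` -/
  adj₂ : iStar ⊣ iShriek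
  /-- `j_! ⊣ j^*` -/
  adj₃ : jShriek ⊣ jUpperStar
  /-- `j^* ⊣ j_*` -/
  adj₄ : jUpperStar ⊣ jStar
  iStar_full : iStar.Full
  iStar_faithful : iStar.Faithful
  jShriek_full : jShriek.Full
  jShriek_faithful : jShriek.Faithful
  jStar_full : jStar.Full
  jStar_faithful : jStar.Faithful
  /-- `j^*(X) ≅ 0` iff `X` lies in the essential image of `i_*`. -/
  isZero_iff : ∀ X : B, IsZero (jUpperStar.obj X) ↔ ∃ Y : A, Nonempty (iStar.obj Y ≅ X)
  /-- the sequence `0 ⟶ i_* i^! X ⟶ X ⟶ j_* j^* X` is exact. -/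
  left_exact_seq : ∀ X : B, Mono (adj₂.counit.app X) ∧
    ∃ w : adj₂.counit.app X ≫ adj₄.unit.app X = 0,
      (ShortComplex.mk (adj₂.counit.app X) (adj₄.unit.app X) w).Exact
  /-- the sequence `j_! j^* X ⟶ X ⟶ i_* i^* X ⟶ 0` is exact. -/
  right_exact_seq : ∀ X : B, Epi (adj₁.unit.app X) ∧
    ∃ w : adj₃.counit.app X ≫ adj₁.unit.app X = 0,
      (ShortComplex.mk (adj₃.counit.app X) (adj₁.unit.app X) w).Exact

variable {𝒞 : Type*} [Category 𝒞] [Abelian 𝒞]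

/-- A torsion pair `(T, F)` in an abelian category. -/
structure IsTorsionPair (T F : Set 𝒞) : Prop where
  isoClosed_torsion : ∀ {X Y : 𝒞}, (X ≅ Y) → X ∈ T → Y ∈ T
  isoClosed_free : ∀ {X Y : 𝒞}, (X ≅ Y) → X ∈ F → Y ∈ F
  hom_zero : ∀ {X Y : 𝒞}, X ∈ T → Y ∈ F → ∀ f : X ⟶ Y, f = 0
  exists_ses : ∀ X : 𝒞, ∃ (T' F' : 𝒞) (_ : T' ∈ T) (_ : F' ∈ F)
      (i : T' ⟶ X) (p : X ⟶ F') (w : i ≫ p = 0),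
      (ShortComplex.mk i p w).ShortExact


section Helpers

variable {C D : Type*} [Category C] [Category D]

lemma functor_additive_of_preservesFiniteLimits [Abelian C] [Abelian D]
    (F : C ⥤ D) [PreservesFiniteLimits F] : F.Additive :=
  letI := preservesBinaryBiproducts_of_preservesBinaryProducts F
  Functor.additive_of_preservesBinaryBiproducts F

noncomputable def cokerKerIsoOfEq [Abelian D] {X Y : D} {f g : X ⟶ Y} (h : f = g) :
    cokernel (kernel.ι f) ≅ cokernel (kernel.ι g) := by
  subst h; exact Iso.refl _

lemma triangle_helper {F : C ⥤ D} {G : D ⥤ C} (adj : F ⊣ G) {X : C} {Z : D}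
    (p : F.obj X ⟶ Z) :
    F.map (adj.unit.app X ≫ G.map p) ≫ adj.counit.app Z = p := by
  rw [F.map_comp, Category.assoc, adj.counit_naturality p, ← Category.assoc]
  simp

end Helpers

/-- gluing torsion pairs along a recollement of abelian categories,
assuming `i^*` and `i^!` are exact. -/
theorem glue_torsionPair_of_recollement
    {A B C : Type*} [Category A] [Category B] [Category C]
    [Abelian A] [Abelian B] [Abelian C]
    (R : AbelianRecollement A B C)
    (h₁ : PreservesFiniteLimits R.iUpperStar) (h₂ : PreservesFiniteColimits R.iUpperStar)
    (h₃ : PreservesFiniteLimits R.iShriek) (h₄ : PreservesFiniteColimits R.iShriek)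
    (T₁ F₁ : Set A) (T₂ F₂ : Set C)
    (hA : IsTorsionPair T₁ F₁) (hC : IsTorsionPair T₂ F₂) :
    IsTorsionPair
      {X : B | R.iUpperStar.obj X ∈ T₁ ∧ R.jUpperStar.obj X ∈ T₂}
      {X : B | R.iShriek.obj X ∈ F₁ ∧ R.jUpperStar.obj X ∈ F₂} := by
  haveI := R.iStar_full; haveI := R.iStar_faithful
  haveI := R.jStar_full; haveI := R.jStar_faithful
  haveI := h₁; haveI := h₂; haveI := h₃; haveI := h₄
  haveI : PreservesLimits R.iStar := R.adj₁.rightAdjoint_preservesLimits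
  haveI : PreservesColimits R.iStar := R.adj₂.leftAdjoint_preservesColimits
  haveI : PreservesLimits R.jUpperStar := R.adj₃.rightAdjoint_preservesLimits
  haveI : PreservesColimits R.jUpperStar := R.adj₄.leftAdjoint_preservesColimits
  haveI : PreservesLimits R.jStar := R.adj₄.rightAdjoint_preservesLimits
  haveI : R.iStar.Additive := functor_additive_of_preservesFiniteLimits _
  haveI : R.iUpperStar.Additive := functor_additive_of_preservesFiniteLimits _
  haveI : R.iShriek.Additive := functor_additive_of_preservesFiniteLimits _
  haveI : R.jUpperStar.Additive := functor_additive_of_preservesFiniteLimits _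
  haveI : R.jStar.Additive := functor_additive_of_preservesFiniteLimits _
  have hzA : ∀ a : A, IsZero (R.jUpperStar.obj (R.iStar.obj a)) :=
    fun a => (R.isZero_iff _).2 ⟨a, ⟨Iso.refl _⟩⟩
  have hzS : ∀ c : C, IsZero (R.iShriek.obj (R.jStar.obj c)) := by
    intro c
    rw [IsZero.iff_id_eq_zero]
    apply (R.adj₂.homEquiv _ _).symm.injective
    apply (R.adj₄.homEquiv _ _).symm.injective
    apply (hzA _).eq_of_src
  constructor
  · -- T is closed under isomorphism
    intro X Y e hX
    exact ⟨hA.isoClosed_torsion (R.iUpperStar.mapIso e) hX.1,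
      hC.isoClosed_torsion (R.jUpperStar.mapIso e) hX.2⟩
  · -- F is closed under isomorphism
    intro X Y e hX
    exact ⟨hA.isoClosed_free (R.iShriek.mapIso e) hX.1,
      hC.isoClosed_free (R.jUpperStar.mapIso e) hX.2⟩
  · -- Hom(T, F) = 0
    intro X Y hX hY f
    have hj : R.jUpperStar.map f = 0 := hC.hom_zero hX.2 hY.2 _
    have h1 : f ≫ R.adj₄.unit.app Y = 0 := by
      have := R.adj₄.unit.naturality f
      simp only [Functor.id_map, Functor.comp_map] at this
      rw [this, hj, Functor.map_zero, comp_zero]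
    obtain ⟨hmono, w, hex⟩ := R.left_exact_seq Y
    haveI : Mono (ShortComplex.mk (R.adj₂.counit.app Y) (R.adj₄.unit.app Y) w).f := hmono
    have hfact := hex.lift_f f h1
    have hg : hex.lift f h1 = 0 := by
      apply (R.adj₁.homEquiv _ _).symm.injective
      rw [hA.hom_zero hX.1 hY.1 ((R.adj₁.homEquiv _ _).symm (hex.lift f h1)),
        hA.hom_zero hX.1 hY.1 ((R.adj₁.homEquiv _ _).symm 0)]
    rw [← hfact, hg, zero_comp]
  · -- existence of the short exact sequence
    intro X
    obtain ⟨TC, FC, hTC, hFC, iC, pC, wC, hSC⟩ := hC.exists_ses (R.jUpperStar.obj X)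
    haveI := hSC.mono_f
    haveI := hSC.epi_g
    set α : X ⟶ R.jStar.obj FC := R.adj₄.unit.app X ≫ R.jStar.map pC with hα
    set ι : kernel α ⟶ X := kernel.ι α with hι
    obtain ⟨TA, FA, hTA, hFA, iA, pA, wA, hSA⟩ := hA.exists_ses (R.iUpperStar.obj (kernel α))
    haveI := hSA.mono_f
    haveI := hSA.epi_g
    set β : kernel α ⟶ R.iStar.obj FA :=
      R.adj₁.unit.app (kernel α) ≫ R.iStar.map pA with hβ
    haveI : Epi (R.adj₁.unit.app (kernel α)) := (R.right_exact_seq (kernel α)).1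
    haveI : Epi (R.iStar.map pA) := preserves_epi_of_preservesColimit _ _
    haveI hβe : Epi β := epi_comp _ _
    set κ : kernel β ⟶ kernel α := kernel.ι β with hκ
    -- the three short exact sequences in B
    have hS1 : (ShortComplex.mk (κ ≫ ι) (cokernel.π (κ ≫ ι))
        (cokernel.condition _)).ShortExact :=
      { exact := ShortComplex.exact_of_g_is_cokernel _ (cokernelIsCokernel _)
        mono_f := mono_comp _ _
        epi_g := by dsimp; infer_instance }
    have hS2 : (ShortComplex.mk κ β (kernel.condition β)).ShortExact :=
      { exact := ShortComplex.exact_of_f_is_kernel _ (kernelIsKernel β)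
        mono_f := by dsimp; infer_instance
        epi_g := hβe }
    have hS3 : (ShortComplex.mk ι (cokernel.π ι) (cokernel.condition ι)).ShortExact :=
      { exact := ShortComplex.exact_of_g_is_cokernel _ (cokernelIsCokernel _)
        mono_f := by dsimp [hι]; infer_instance
        epi_g := by dsimp; infer_instance }
    -- compatibility of the transposed maps
    have hcommA : R.iUpperStar.map β ≫ R.adj₁.counit.app FA = pA := triangle_helper R.adj₁ pA
    have hcommC : R.jUpperStar.map α ≫ R.adj₄.counit.app FC = pC := triangle_helper R.adj₄ pC
    -- i^* (kernel β) ∈ T₁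
    have hUTi : R.iUpperStar.obj (kernel β) ∈ T₁ := by
      have eA : R.iUpperStar.obj (kernel β) ≅ TA :=
        PreservesKernel.iso R.iUpperStar β ≪≫
          (kernelCompMono (R.iUpperStar.map β) (R.adj₁.counit.app FA)).symm ≪≫
          kernelIsoOfEq hcommA ≪≫
          IsLimit.conePointUniqueUpToIso (kernelIsKernel pA) hSA.exact.fIsKernel
      exact hA.isoClosed_torsion eA.symm hTA
    -- j^* (kernel β) ∈ T₂
    have hS2j := hS2.map_of_exact R.jUpperStar
    haveI : IsIso (R.jUpperStar.map κ) := hS2j.isIso_f_iff.2 (hzA FA)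
    have hUTj : R.jUpperStar.obj (kernel β) ∈ T₂ := by
      have eC : R.jUpperStar.obj (kernel α) ≅ TC :=
        PreservesKernel.iso R.jUpperStar α ≪≫
          (kernelCompMono (R.jUpperStar.map α) (R.adj₄.counit.app FC)).symm ≪≫
          kernelIsoOfEq hcommC ≪≫
          IsLimit.conePointUniqueUpToIso (kernelIsKernel pC) hSC.exact.fIsKernel
      exact hC.isoClosed_torsion (asIso (R.jUpperStar.map κ) ≪≫ eC).symm hTC
    -- j^* (cokernel (κ ≫ ι)) ∈ F₂
    haveI : IsIso (kernelComparison α R.jUpperStar) := by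
      rw [← PreservesKernel.iso_hom]; infer_instance
    have hVFj : R.jUpperStar.obj (cokernel (κ ≫ ι)) ∈ F₂ := by
      have h5 : cokernel (kernel.ι (R.jUpperStar.map α ≫ R.adj₄.counit.app FC)) ≅ FC :=
        cokerKerIsoOfEq hcommC ≪≫
          IsColimit.coconePointUniqueUpToIso (cokernelIsCokernel (kernel.ι pC))
            (Abelian.epiIsCokernelOfKernel (KernelFork.ofι (kernel.ι pC) (kernel.condition pC)) (kernelIsKernel pC))
      have h6 : kernel.ι (R.jUpperStar.map α ≫ R.adj₄.counit.app FC) =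
          (kernelCompMono (R.jUpperStar.map α) (R.adj₄.counit.app FC)).hom ≫
            kernel.ι (R.jUpperStar.map α) := by simp
      have hι' : R.jUpperStar.map ι =
          kernelComparison α R.jUpperStar ≫ kernel.ι (R.jUpperStar.map α) := by
        rw [hι]; exact (kernelComparison_comp_ι α R.jUpperStar).symm
      have e1 : R.jUpperStar.obj (cokernel (κ ≫ ι)) ≅
          cokernel (R.jUpperStar.map (κ ≫ ι)) := PreservesCokernel.iso _ _
      have e2 : cokernel (R.jUpperStar.map (κ ≫ ι)) ≅
          cokernel (R.jUpperStar.map κ ≫ R.jUpperStar.map ι) :=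
        cokernelIsoOfEq (R.jUpperStar.map_comp κ ι)
      have e3 : cokernel (R.jUpperStar.map κ ≫ R.jUpperStar.map ι) ≅
          cokernel (R.jUpperStar.map ι) :=
        cokernelEpiComp (R.jUpperStar.map κ) (R.jUpperStar.map ι)
      have e4 : cokernel (R.jUpperStar.map ι) ≅
          cokernel (kernel.ι (R.jUpperStar.map α)) :=
        cokernelIsoOfEq hι' ≪≫ cokernelEpiComp (kernelComparison α R.jUpperStar)
          (kernel.ι (R.jUpperStar.map α))
      have e5 : cokernel (kernel.ι (R.jUpperStar.map α)) ≅
          cokernel (kernel.ι (R.jUpperStar.map α ≫ R.adj₄.counit.app FC)) :=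
        (cokernelIsoOfEq h6 ≪≫
          cokernelEpiComp ((kernelCompMono (R.jUpperStar.map α)
            (R.adj₄.counit.app FC)).hom) (kernel.ι (R.jUpperStar.map α))).symm
      have e : R.jUpperStar.obj (cokernel (κ ≫ ι)) ≅ FC :=
        e1 ≪≫ e2 ≪≫ e3 ≪≫ e4 ≪≫ e5 ≪≫ h5
      exact hC.isoClosed_free e.symm hFC
    -- i^! (cokernel (κ ≫ ι)) ∈ F₁
    have hVFi : R.iShriek.obj (cokernel (κ ≫ ι)) ∈ F₁ := by
      haveI : Mono (cokernel.desc ι α (kernel.condition α)) :=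
        inferInstanceAs (Mono (Abelian.factorThruCoimage α))
      haveI : Mono (R.iShriek.map (cokernel.desc ι α (kernel.condition α))) :=
        preserves_mono_of_preservesLimit _ _
      have hz3 : IsZero (R.iShriek.obj (cokernel ι)) :=
        IsZero.of_mono (R.iShriek.map (cokernel.desc ι α (kernel.condition α))) (hzS FC)
      have hS3i := hS3.map_of_exact R.iShriek
      haveI : IsIso (R.iShriek.map ι) := hS3i.isIso_f_iff.2 hz3
      have hS2i := hS2.map_of_exact R.iShriek
      haveI := hS2i.epi_g
      have f1 : R.iShriek.obj (cokernel (κ ≫ ι)) ≅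
          cokernel (R.iShriek.map (κ ≫ ι)) := PreservesCokernel.iso _ _
      have f2 : cokernel (R.iShriek.map (κ ≫ ι)) ≅
          cokernel (R.iShriek.map κ ≫ R.iShriek.map ι) :=
        cokernelIsoOfEq (R.iShriek.map_comp κ ι)
      have f3 : cokernel (R.iShriek.map κ ≫ R.iShriek.map ι) ≅
          cokernel (R.iShriek.map κ) :=
        cokernelCompIsIso (R.iShriek.map κ) (R.iShriek.map ι)
      have f4 : cokernel (R.iShriek.map κ) ≅ R.iShriek.obj (R.iStar.obj FA) :=
        IsColimit.coconePointUniqueUpToIso (cokernelIsCokernel (R.iShriek.map κ))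
          hS2i.exact.gIsCokernel
      have f5 : R.iShriek.obj (R.iStar.obj FA) ≅ FA := (asIso (R.adj₂.unit.app FA)).symm
      have e' : R.iShriek.obj (cokernel (κ ≫ ι)) ≅ FA :=
        f1 ≪≫ f2 ≪≫ f3 ≪≫ f4 ≪≫ f5
      exact hA.isoClosed_free e'.symm hFA
    exact ⟨kernel β, cokernel (κ ≫ ι), ⟨hUTi, hUTj⟩, ⟨hVFi, hVFj⟩, κ ≫ ι,
      cokernel.π _, cokernel.condition _, hS1⟩


end RecollementFS
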